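/- arXiv:2012.04449 — 3 statements merged into one kernel-verified Lean document; each statement's English description precedes it below -/
import Mathlib

section
/- Let N ≥ 1 be an integer, s ∈ (0,1), Ω ⊂ ℝ^N a bounded measurable set, and u : ℝ^N → ℝ a measurable function with ∫_{ℝ^N} |u|² dx < ∞ and 𝓔_{ℝ^{2N}}(u) < ∞. Let (α_n) ⊂ ℝ^N be a sequence with |α_n| → ∞, and set u_n(x) = u(x − α_n). Then (1/2) 𝓔_{ℝ^{2N}∖(Ω×Ω)}(u_n) + ∫_{ℝ^N∖Ω} |u_n|² dx → (1/2) 𝓔_{ℝ^{2N}}(u) + ∫_{ℝ^N} |u|² dx as n → ∞. -/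
open MeasureTheory ENNReal Filter

/-- If `F` has finite integral and the sets `S n` escape to infinity (measured by a
measurable function `ρ` that is eventually large on `S n`), then `∫⁻ in S n, F → 0`. -/
lemma tendsto_setLIntegral_zero_of_escape {X : Type*} [MeasurableSpace X] (μ : Measure X)
    {F : X → ℝ≥0∞} (hF : Measurable F) (hfin : (∫⁻ x, F x ∂μ) ≠ ⊤)
    {S : ℕ → Set X} {ρ : X → ℝ} (hρ : Measurable ρ)
    (hS : ∀ k : ℕ, ∀ᶠ n in atTop, S n ⊆ {x | (k : ℝ) ≤ ρ x}) :
    Tendsto (fun n => ∫⁻ x in S n, F x ∂μ) atTop (nhds 0) := by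
  set ν := μ.withDensity F with hν
  have hνapp : ∀ {A : Set X}, MeasurableSet A → ν A = ∫⁻ x in A, F x ∂μ := by
    intro A hA; rw [hν, withDensity_apply _ hA]
  have hAm : ∀ k : ℕ, MeasurableSet {x | (k : ℝ) ≤ ρ x} :=
    fun k => measurableSet_le measurable_const hρ
  have hanti : Antitone (fun k : ℕ => {x | (k : ℝ) ≤ ρ x}) := by
    intro k l hkl x hx
    exact le_trans (by exact_mod_cast hkl : (k:ℝ) ≤ l) hx
  have hiInter : (⋂ k : ℕ, {x | (k : ℝ) ≤ ρ x}) = ∅ := by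
    ext x
    simp only [Set.mem_iInter, Set.mem_setOf_eq, Set.mem_empty_iff_false, iff_false, not_forall,
      not_le]
    obtain ⟨k, hk⟩ := exists_nat_gt (ρ x)
    exact ⟨k, hk⟩
  have hfin' : ∃ k : ℕ, ν {x | (k : ℝ) ≤ ρ x} ≠ ⊤ := by
    refine ⟨0, ?_⟩
    exact ne_top_of_le_ne_top (by rw [hνapp MeasurableSet.univ] at *; simpa using hfin)
      (measure_mono (Set.subset_univ _))
  have hlim : Tendsto (fun k : ℕ => ν {x | (k : ℝ) ≤ ρ x}) atTop (nhds 0) := by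
    have := tendsto_measure_iInter_atTop (μ := ν)
      (fun k => (hAm k).nullMeasurableSet) hanti hfin'
    rwa [hiInter, measure_empty] at this
  rw [ENNReal.tendsto_nhds_zero]
  intro ε hε
  rw [ENNReal.tendsto_nhds_zero] at hlim
  obtain ⟨k, hk⟩ := (hlim ε hε).exists
  filter_upwards [hS k] with n hn
  calc ∫⁻ x in S n, F x ∂μ ≤ ∫⁻ x in {x | (k : ℝ) ≤ ρ x}, F x ∂μ := lintegral_mono_set hn
    _ = ν _ := (hνapp (hAm k)).symm
    _ ≤ ε := hk

noncomputable def gagliardo (N : ℕ) (s : ℝ) (u : EuclideanSpace ℝ (Fin N) → ℝ)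
    (A : Set (EuclideanSpace ℝ (Fin N) × EuclideanSpace ℝ (Fin N))) : ℝ≥0∞ :=
  ∫⁻ p in A, ENNReal.ofReal (|u p.1 - u p.2| ^ 2 / ‖p.1 - p.2‖ ^ ((N : ℝ) + 2 * s))


/-- For translates `u_n = u(· − α_n)` with `|α_n| → ∞` and `Ω` bounded, the exterior
fractional norm squared of `u_n` (relative to `Ω`) converges to the full fractional
Sobolev norm squared of `u`. -/
theorem stmt_4 (N : ℕ) (hN : 1 ≤ N) (s : ℝ) (hs : s ∈ Set.Ioo (0 : ℝ) 1)
    (Ω : Set (EuclideanSpace ℝ (Fin N))) (hΩb : Bornology.IsBounded Ω) (hΩm : MeasurableSet Ω)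
    (u : EuclideanSpace ℝ (Fin N) → ℝ) (hu : Measurable u)
    (huL2 : (∫⁻ x, ENNReal.ofReal (|u x| ^ 2)) < ⊤)
    (huG : gagliardo N s u Set.univ < ⊤)
    (α : ℕ → EuclideanSpace ℝ (Fin N)) (hα : Tendsto (fun n => ‖α n‖) atTop atTop) :
    Tendsto
      (fun n =>
        (1 / 2) * gagliardo N s (fun x => u (x - α n)) ((Ω ×ˢ Ω)ᶜ)
          + ∫⁻ x in Ωᶜ, ENNReal.ofReal (|u (x - α n)| ^ 2))
      atTop
      (nhds ((1 / 2) * gagliardo N s u Set.univ + ∫⁻ x, ENNReal.ofReal (|u x| ^ 2))) := by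
  classical
  set F : (EuclideanSpace ℝ (Fin N)) × (EuclideanSpace ℝ (Fin N)) → ℝ≥0∞ :=
    fun p => ENNReal.ofReal (|u p.1 - u p.2| ^ 2 / ‖p.1 - p.2‖ ^ ((N : ℝ) + 2 * s)) with hFdef
  set g : (EuclideanSpace ℝ (Fin N)) → ℝ≥0∞ := fun x => ENNReal.ofReal (|u x| ^ 2) with hgdef
  have hFmeas : Measurable F := by
    rw [hFdef]
    apply Measurable.ennreal_ofReal
    apply Measurable.div
    · have h1 : Measurable fun p : (EuclideanSpace ℝ (Fin N)) × (EuclideanSpace ℝ (Fin N)) => u p.1 := hu.comp measurable_fst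
      have h2 : Measurable fun p : (EuclideanSpace ℝ (Fin N)) × (EuclideanSpace ℝ (Fin N)) => u p.2 := hu.comp measurable_snd
      exact (h1.sub h2).abs.pow_const 2
    · have h3 : Continuous fun t : ℝ => t ^ ((N : ℝ) + 2 * s) :=
        Real.continuous_rpow_const (by have := hs.1; positivity)
      exact h3.measurable.comp ((measurable_fst.sub measurable_snd).norm)
  have hgmeas : Measurable g := by
    rw [hgdef]; exact (hu.abs.pow_const 2).ennreal_ofReal
  -- bound for Ω
  obtain ⟨R, hR⟩ := hΩb.subset_closedBall 0
  -- the shifted sets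
  set S : ℕ → Set ((EuclideanSpace ℝ (Fin N)) × (EuclideanSpace ℝ (Fin N))) := fun n => ((· + α n) ⁻¹' Ω) ×ˢ ((· + α n) ⁻¹' Ω) with hSdef
  set T : ℕ → Set (EuclideanSpace ℝ (Fin N)) := fun n => (· + α n) ⁻¹' Ω with hTdef
  have hTm : ∀ n, MeasurableSet (T n) := fun n => (measurable_add_const (α n)) hΩm
  have hSm : ∀ n, MeasurableSet (S n) := fun n => (hTm n).prod (hTm n)
  -- change of variables
  have hGeq : ∀ n, gagliardo N s (fun x => u (x - α n)) ((Ω ×ˢ Ω)ᶜ)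
      = ∫⁻ p in (S n)ᶜ, F p := by
    intro n
    have h1 : gagliardo N s (fun x => u (x - α n)) ((Ω ×ˢ Ω)ᶜ)
        = ∫⁻ p in (Ω ×ˢ Ω)ᶜ, F (p - (α n, α n)) := by
      unfold gagliardo
      congr 1
      funext p
      have h2 : p.1 - α n - (p.2 - α n) = p.1 - p.2 := by abel
      simp [hFdef, h2]
    rw [h1]
    haveI : MeasureTheory.Measure.IsAddRightInvariant
        (volume : Measure ((EuclideanSpace ℝ (Fin N)) × (EuclideanSpace ℝ (Fin N)))) :=
      MeasureTheory.Measure.prod.instIsAddRightInvariant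
    have hmp := measurePreserving_add_right (volume : Measure ((EuclideanSpace ℝ (Fin N)) × (EuclideanSpace ℝ (Fin N)))) (α n, α n)
    have hemb := (MeasurableEquiv.addRight ((α n, α n) : (EuclideanSpace ℝ (Fin N)) × (EuclideanSpace ℝ (Fin N)))).measurableEmbedding
    have key := hmp.setLIntegral_comp_preimage_emb hemb (fun p => F (p - (α n, α n))) ((Ω ×ˢ Ω)ᶜ)
    simp only [add_sub_cancel_right] at key
    rw [← key]
    have hset : (fun p => p + (α n, α n)) ⁻¹' (Ω ×ˢ Ω)ᶜ = (S n)ᶜ := by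
      rw [Set.preimage_compl]
      congr 1
    rw [hset]
  have hLeq : ∀ n, (∫⁻ x in Ωᶜ, g (x - α n)) = ∫⁻ x in (T n)ᶜ, g x := by
    intro n
    have hmp := measurePreserving_add_right (volume : Measure (EuclideanSpace ℝ (Fin N))) (α n)
    have hemb := (MeasurableEquiv.addRight (α n : EuclideanSpace ℝ (Fin N))).measurableEmbedding
    have key := hmp.setLIntegral_comp_preimage_emb hemb (fun x => g (x - α n)) Ωᶜ
    simp only [add_sub_cancel_right] at key
    rw [← key, Set.preimage_compl]
  -- finiteness
  have hCF : (∫⁻ p, F p) ≠ ⊤ := by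
    have : gagliardo N s u Set.univ = ∫⁻ p, F p := by
      unfold gagliardo; rw [Measure.restrict_univ]
    rw [← this]; exact huG.ne
  have hCg : (∫⁻ x, g x) ≠ ⊤ := huL2.ne
  -- escape
  have hSesc : ∀ k : ℕ, ∀ᶠ n in atTop, S n ⊆ {p : (EuclideanSpace ℝ (Fin N)) × (EuclideanSpace ℝ (Fin N)) | (k : ℝ) ≤ ‖p.1‖} := by
    intro k
    filter_upwards [hα.eventually_ge_atTop ((k : ℝ) + R)] with n hn p hp
    have hp1 : p.1 + α n ∈ Ω := hp.1
    have h1 : ‖p.1 + α n‖ ≤ R := by simpa using (hR hp1)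
    have h2 : ‖α n‖ - ‖p.1 + α n‖ ≤ ‖α n - (p.1 + α n)‖ := norm_sub_norm_le _ _
    have h3 : α n - (p.1 + α n) = -p.1 := by abel
    rw [h3, norm_neg] at h2
    simp only [Set.mem_setOf_eq]
    linarith
  have hTesc : ∀ k : ℕ, ∀ᶠ n in atTop, T n ⊆ {x : (EuclideanSpace ℝ (Fin N)) | (k : ℝ) ≤ ‖x‖} := by
    intro k
    filter_upwards [hα.eventually_ge_atTop ((k : ℝ) + R)] with n hn x hx
    have h1 : ‖x + α n‖ ≤ R := by simpa using (hR hx)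
    have h2 : ‖α n‖ - ‖x + α n‖ ≤ ‖α n - (x + α n)‖ := norm_sub_norm_le _ _
    have h3 : α n - (x + α n) = -x := by abel
    rw [h3, norm_neg] at h2
    simp only [Set.mem_setOf_eq]
    linarith
  have haS : Tendsto (fun n => ∫⁻ p in S n, F p) atTop (nhds 0) :=
    tendsto_setLIntegral_zero_of_escape _ hFmeas hCF (measurable_fst.norm) hSesc
  have haT : Tendsto (fun n => ∫⁻ x in T n, g x) atTop (nhds 0) :=
    tendsto_setLIntegral_zero_of_escape _ hgmeas hCg measurable_norm hTesc
  -- complements converge to the full integrals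
  have hSc : Tendsto (fun n => ∫⁻ p in (S n)ᶜ, F p) atTop (nhds (∫⁻ p, F p)) := by
    have heq : ∀ n, (∫⁻ p in (S n)ᶜ, F p) = (∫⁻ p, F p) - ∫⁻ p in S n, F p := by
      intro n
      refine ENNReal.eq_sub_of_add_eq ?_ ?_
      · exact ne_top_of_le_ne_top hCF (lintegral_mono_set (Set.subset_univ _) |>.trans_eq
          (by rw [Measure.restrict_univ]))
      · rw [add_comm]; exact lintegral_add_compl F (hSm n)
    simp only [heq]
    have := ENNReal.Tendsto.sub (tendsto_const_nhds (x := ∫⁻ p, F p) (f := atTop)) haS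
      (Or.inl hCF)
    simpa using this
  have hTc : Tendsto (fun n => ∫⁻ x in (T n)ᶜ, g x) atTop (nhds (∫⁻ x, g x)) := by
    have heq : ∀ n, (∫⁻ x in (T n)ᶜ, g x) = (∫⁻ x, g x) - ∫⁻ x in T n, g x := by
      intro n
      refine ENNReal.eq_sub_of_add_eq ?_ ?_
      · exact ne_top_of_le_ne_top hCg (lintegral_mono_set (Set.subset_univ _) |>.trans_eq
          (by rw [Measure.restrict_univ]))
      · rw [add_comm]; exact lintegral_add_compl g (hTm n)
    simp only [heq]
    have := ENNReal.Tendsto.sub (tendsto_const_nhds (x := ∫⁻ x, g x) (f := atTop)) haT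
      (Or.inl hCg)
    simpa using this
  -- combine
  have hfinal : Tendsto
      (fun n => (1 / 2 : ℝ≥0∞) * (∫⁻ p in (S n)ᶜ, F p) + ∫⁻ x in (T n)ᶜ, g x) atTop
      (nhds ((1 / 2 : ℝ≥0∞) * (∫⁻ p, F p) + ∫⁻ x, g x)) :=
    Tendsto.add (ENNReal.Tendsto.const_mul hSc (Or.inr (by norm_num))) hTc
  have hgoalrw : gagliardo N s u Set.univ = ∫⁻ p, F p := by
    unfold gagliardo; rw [Measure.restrict_univ]
  rw [hgoalrw]
  refine hfinal.congr fun n => ?_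
  rw [hGeq n, hLeq n]
end

section
/- Let N ≥ 1 be an integer, s ∈ (0,1), Ω ⊂ ℝ^N a bounded measurable set, and u : ℝ^N → ℝ a measurable function with ∫_{ℝ^N} |u|² dx < ∞ and 𝓔_{ℝ^{2N}}(u) < ∞. Let (α_n) ⊂ ℝ^N with |α_n| → ∞ and set u_n(x) = u(x − α_n). Then a_n := (1/2) 𝓔_{Ω×Ω}(u_n) + ∫_Ω |u_n|² dx → 0 as n → ∞. -/
open MeasureTheory ENNReal Filter

/-- Auxiliary squeeze lemma: if `a n` is eventually bounded by the integral of a fixed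
integrable `g` over `B m`, where `B` is an antitone family of measurable sets with empty
intersection, then `a n → 0`. -/
lemma aux_tendsto_zero {β : Type*} [MeasurableSpace β] {μ : Measure β} {g : β → ℝ≥0∞}
    (hg : Measurable g) (hfin : ∫⁻ x, g x ∂μ ≠ ⊤) (a : ℕ → ℝ≥0∞) (B : ℕ → Set β)
    (hBm : ∀ m, MeasurableSet (B m)) (hBanti : Antitone B) (hBempty : ⋂ m, B m = ∅)
    (hle : ∀ m, ∀ᶠ n in atTop, a n ≤ ∫⁻ x in B m, g x ∂μ) :
    Tendsto a atTop (nhds 0) := by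
  set ν : Measure β := μ.withDensity g with hν
  have hνB : ∀ m, ν (B m) = ∫⁻ x in B m, g x ∂μ := fun m => withDensity_apply g (hBm m)
  have hfin' : ∃ m, ν (B m) ≠ ⊤ := by
    refine ⟨0, ?_⟩
    rw [hνB]
    exact ((setLIntegral_le_lintegral _ _).trans_lt hfin.lt_top).ne
  have h1 : Tendsto (fun m => ν (B m)) atTop (nhds 0) := by
    have := tendsto_measure_iInter_atTop (μ := ν)
      (fun m => (hBm m).nullMeasurableSet) hBanti hfin'
    rwa [hBempty, measure_empty] at this
  rw [ENNReal.tendsto_nhds_zero]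
  intro ε hε
  obtain ⟨m, hm⟩ := (ENNReal.tendsto_nhds_zero.1 h1 ε hε).exists
  filter_upwards [hle m] with n hn
  exact hn.trans (by rw [← hνB]; exact hm)

/-- For translates `u_n = u(· − α_n)` with `|α_n| → ∞` and `Ω` bounded, the local energy
`a_n = (1/2) 𝓔_{Ω×Ω}(u_n) + ∫_Ω |u_n|² dx` tends to `0`. -/
theorem stmt_5 (N : ℕ) (hN : 1 ≤ N) (s : ℝ) (hs : s ∈ Set.Ioo (0 : ℝ) 1)
    (Ω : Set (EuclideanSpace ℝ (Fin N))) (hΩb : Bornology.IsBounded Ω) (hΩm : MeasurableSet Ω)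
    (u : EuclideanSpace ℝ (Fin N) → ℝ) (hu : Measurable u)
    (huL2 : (∫⁻ x, ENNReal.ofReal (|u x| ^ 2)) < ⊤)
    (huG : gagliardo N s u Set.univ < ⊤)
    (α : ℕ → EuclideanSpace ℝ (Fin N)) (hα : Tendsto (fun n => ‖α n‖) atTop atTop) :
    Tendsto
      (fun n =>
        (1 / 2) * gagliardo N s (fun x => u (x - α n)) (Ω ×ˢ Ω)
          + ∫⁻ x in Ω, ENNReal.ofReal (|u (x - α n)| ^ 2))
      atTop (nhds 0) := by
  obtain ⟨M₀, hM₀⟩ := hΩb.subset_closedBall 0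
  set M : ℝ := max M₀ 0 with hMdef
  have hM : Ω ⊆ Metric.closedBall 0 M :=
    hM₀.trans (Metric.closedBall_subset_closedBall (le_max_left _ _))
  have hM0 : 0 ≤ M := le_max_right _ _
  -- the fixed integrands
  set g : EuclideanSpace ℝ (Fin N) → ℝ≥0∞ := fun x => ENNReal.ofReal (|u x| ^ 2) with hgdef
  set G : EuclideanSpace ℝ (Fin N) × EuclideanSpace ℝ (Fin N) → ℝ≥0∞ :=
    fun p => ENNReal.ofReal (|u p.1 - u p.2| ^ 2 / ‖p.1 - p.2‖ ^ ((N : ℝ) + 2 * s)) with hGdef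
  have hg : Measurable g := by
    apply ENNReal.measurable_ofReal.comp
    exact (hu.abs.pow_const 2)
  have hG : Measurable G := by
    apply ENNReal.measurable_ofReal.comp
    apply Measurable.div
    · exact (((hu.comp measurable_fst).sub (hu.comp measurable_snd)).abs.pow_const 2)
    · exact ((measurable_fst.sub measurable_snd).norm.pow_const _)
  have hGfin : ∫⁻ p, G p ∂(volume : Measure (EuclideanSpace ℝ (Fin N) × EuclideanSpace ℝ (Fin N))) ≠ ⊤ := by
    have : gagliardo N s u Set.univ = ∫⁻ p, G p ∂(volume : Measure (EuclideanSpace ℝ (Fin N) × EuclideanSpace ℝ (Fin N))) := by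
      rw [gagliardo, Measure.restrict_univ]
    rw [← this]; exact huG.ne
  -- eventual escape estimate
  have hescape : ∀ m : ℕ, ∀ᶠ n in atTop, ∀ x ∈ Ω, (m : ℝ) < ‖x - α n‖ := by
    intro m
    filter_upwards [hα.eventually_gt_atTop ((m : ℝ) + M)] with n hn x hx
    have h1 : ‖x‖ ≤ M := by simpa using hM hx
    have h2 : ‖α n‖ - ‖x‖ ≤ ‖x - α n‖ :=
      (norm_sub_norm_le (α n) x).trans_eq (norm_sub_rev _ _)
    linarith
  -- second term tends to 0
  have hterm2 : Tendsto (fun n => ∫⁻ x in Ω, ENNReal.ofReal (|u (x - α n)| ^ 2)) atTop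
      (nhds 0) := by
    apply aux_tendsto_zero hg huL2.ne _ (fun m => (Metric.closedBall (0 : EuclideanSpace ℝ (Fin N)) m)ᶜ)
    · exact fun m => measurableSet_closedBall.compl
    · intro i j hij
      exact Set.compl_subset_compl.2 (Metric.closedBall_subset_closedBall (by exact_mod_cast hij))
    · ext x
      simp only [Set.mem_iInter, Set.mem_compl_iff, Metric.mem_closedBall, Set.mem_empty_iff_false,
        iff_false, not_forall, not_not]
      obtain ⟨m, hm⟩ := exists_nat_ge (dist x 0)
      exact ⟨m, hm⟩
    · intro m
      filter_upwards [hescape m] with n hn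
      have hsub : Ω ⊆ (fun x => x - α n) ⁻¹' (Metric.closedBall (0 : EuclideanSpace ℝ (Fin N)) m)ᶜ := by
        intro x hx
        simp only [Set.mem_preimage, Set.mem_compl_iff, Metric.mem_closedBall, dist_zero_right,
          not_le]
        exact hn x hx
      calc ∫⁻ x in Ω, ENNReal.ofReal (|u (x - α n)| ^ 2)
          ≤ ∫⁻ x in (fun x => x - α n) ⁻¹' (Metric.closedBall (0 : EuclideanSpace ℝ (Fin N)) m)ᶜ, g (x - α n) :=
            lintegral_mono_set hsub
        _ = ∫⁻ x in (Metric.closedBall (0 : EuclideanSpace ℝ (Fin N)) m)ᶜ, g x :=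
            (measurePreserving_sub_right volume (α n)).setLIntegral_comp_preimage
              measurableSet_closedBall.compl hg
  -- first term tends to 0
  have hterm1 : Tendsto (fun n => gagliardo N s (fun x => u (x - α n)) (Ω ×ˢ Ω)) atTop
      (nhds 0) := by
    apply aux_tendsto_zero hG hGfin _
      (fun m => ((Metric.closedBall (0 : EuclideanSpace ℝ (Fin N)) m)ᶜ) ×ˢ (Set.univ : Set (EuclideanSpace ℝ (Fin N))))
    · exact fun m => measurableSet_closedBall.compl.prod MeasurableSet.univ
    · intro i j hij
      exact Set.prod_mono (Set.compl_subset_compl.2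
        (Metric.closedBall_subset_closedBall (by exact_mod_cast hij))) subset_rfl
    · ext p
      simp only [Set.mem_iInter, Set.mem_prod, Set.mem_compl_iff, Metric.mem_closedBall,
        Set.mem_univ, and_true, Set.mem_empty_iff_false, iff_false, not_forall, not_not]
      obtain ⟨m, hm⟩ := exists_nat_ge (dist p.1 0)
      exact ⟨m, hm⟩
    · intro m
      filter_upwards [hescape m] with n hn
      set T : EuclideanSpace ℝ (Fin N) × EuclideanSpace ℝ (Fin N) → EuclideanSpace ℝ (Fin N) × EuclideanSpace ℝ (Fin N) := fun p => (p.1 - α n, p.2 - α n) with hT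
      have hTmp : MeasurePreserving T (volume : Measure (EuclideanSpace ℝ (Fin N) × EuclideanSpace ℝ (Fin N))) volume := by
        rw [Measure.volume_eq_prod]
        exact (measurePreserving_sub_right volume (α n)).prod
          (measurePreserving_sub_right volume (α n))
      have hsub : Ω ×ˢ Ω ⊆ T ⁻¹' (((Metric.closedBall (0 : EuclideanSpace ℝ (Fin N)) m)ᶜ) ×ˢ (Set.univ : Set (EuclideanSpace ℝ (Fin N)))) := by
        rintro ⟨x, y⟩ ⟨hx, hy⟩
        refine ⟨?_, Set.mem_univ _⟩
        simp only [Set.mem_compl_iff, Metric.mem_closedBall, dist_zero_right, not_le]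
        exact hn x hx
      have hkey : gagliardo N s (fun x => u (x - α n)) (Ω ×ˢ Ω)
          = ∫⁻ p in Ω ×ˢ Ω, G (T p) := by
        rw [gagliardo]
        congr 1
        ext p
        have : (p.1 - α n) - (p.2 - α n) = p.1 - p.2 := by abel
        simp only [hGdef, hT, this]
      calc gagliardo N s (fun x => u (x - α n)) (Ω ×ˢ Ω)
          = ∫⁻ p in Ω ×ˢ Ω, G (T p) := hkey
        _ ≤ ∫⁻ p in T ⁻¹' (((Metric.closedBall (0 : EuclideanSpace ℝ (Fin N)) m)ᶜ) ×ˢ (Set.univ : Set (EuclideanSpace ℝ (Fin N)))), G (T p) :=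
            lintegral_mono_set hsub
        _ = ∫⁻ p in ((Metric.closedBall (0 : EuclideanSpace ℝ (Fin N)) m)ᶜ) ×ˢ (Set.univ : Set (EuclideanSpace ℝ (Fin N))), G p :=
            hTmp.setLIntegral_comp_preimage
              (measurableSet_closedBall.compl.prod MeasurableSet.univ) hG
  have : Tendsto (fun n => (1 / 2 : ℝ≥0∞) * gagliardo N s (fun x => u (x - α n)) (Ω ×ˢ Ω))
      atTop (nhds 0) := by
    have := ENNReal.Tendsto.const_mul (a := (1 / 2 : ℝ≥0∞)) hterm1
      (Or.inr (by simp))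
    simpa using this
  simpa using this.add hterm2
end

section
/- For all real numbers a, b ≥ 0 and every real β ≥ 1, the inequality (a^{(β+1)/2} − b^{(β+1)/2})² ≤ ((β+1)²/(4β)) (a − b)(a^β − b^β) holds. (This algebraic inequality relates the test-function computation with u^β to the Gagliardo energy of u^{(β+1)/2} in the Moser iteration of the boundedness proof.) -/
open Real MeasureTheory intervalIntegral

lemma aux_cs (a b q : ℝ) (hb : 0 ≤ b) (hab : b ≤ a) (hq : 0 < q) :
    (∫ t in b..a, t ^ q) ^ 2 ≤ (a - b) * ∫ t in b..a, t ^ (2 * q) := by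
  set J := ∫ t in b..a, t ^ q with hJ
  have hint1 : IntervalIntegrable (fun t : ℝ => t ^ q) volume b a :=
    intervalIntegrable_rpow (Or.inl hq.le)
  have hint2 : IntervalIntegrable (fun t : ℝ => t ^ (2 * q)) volume b a :=
    intervalIntegrable_rpow (Or.inl (by positivity))
  rcases eq_or_lt_of_le hab with rfl | hab'
  · simp [hJ]
  have h0 : (0:ℝ) ≤ ∫ t in b..a, ((a - b) * t ^ q - J) ^ 2 := by
    apply intervalIntegral.integral_nonneg hab
    intro t _
    positivity
  have hcong : (∫ t in b..a, ((a - b) * t ^ q - J) ^ 2) =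
      ∫ t in b..a, ((a - b) ^ 2 * t ^ (2 * q) - 2 * (a - b) * J * t ^ q + J ^ 2) := by
    apply intervalIntegral.integral_congr
    intro t ht
    have ht0 : 0 ≤ t := by
      rw [Set.uIcc_of_le hab] at ht
      exact hb.trans ht.1
    have : t ^ (2 * q) = t ^ q * t ^ q := by
      rw [two_mul, Real.rpow_add' ht0 (by positivity)]
    simp only [this]; ring
  have hsplit : (∫ t in b..a, ((a - b) ^ 2 * t ^ (2 * q) - 2 * (a - b) * J * t ^ q + J ^ 2)) =
      (a - b) ^ 2 * (∫ t in b..a, t ^ (2 * q)) - 2 * (a - b) * J * J + J ^ 2 * (a - b) := by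
    rw [intervalIntegral.integral_add ((hint2.const_mul _).sub (hint1.const_mul _))
          intervalIntegrable_const,
        intervalIntegral.integral_sub (hint2.const_mul _) (hint1.const_mul _),
        intervalIntegral.integral_const_mul, intervalIntegral.integral_const_mul,
        intervalIntegral.integral_const]
    simp only [smul_eq_mul]; ring
  rw [hcong, hsplit] at h0
  have hpos : 0 < a - b := by linarith
  nlinarith [h0, hpos]

/-- The algebraic inequality of the Moser iteration: for `a, b ≥ 0` and `β ≥ 1`,
`(a^{(β+1)/2} − b^{(β+1)/2})² ≤ ((β+1)²/(4β)) (a − b)(a^β − b^β)`. -/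
theorem stmt_13 (a b β : ℝ) (ha : 0 ≤ a) (hb : 0 ≤ b) (hβ : 1 ≤ β) :
    (a ^ ((β + 1) / 2) - b ^ ((β + 1) / 2)) ^ 2 ≤
      ((β + 1) ^ 2 / (4 * β)) * ((a - b) * (a ^ β - b ^ β)) := by
  -- wlog b ≤ a
  wlog hab : b ≤ a generalizing a b
  · have := this b a hb ha (le_of_not_ge hab)
    calc (a ^ ((β + 1) / 2) - b ^ ((β + 1) / 2)) ^ 2
        = (b ^ ((β + 1) / 2) - a ^ ((β + 1) / 2)) ^ 2 := by ring
      _ ≤ ((β + 1) ^ 2 / (4 * β)) * ((b - a) * (b ^ β - a ^ β)) := this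
      _ = ((β + 1) ^ 2 / (4 * β)) * ((a - b) * (a ^ β - b ^ β)) := by ring
  rcases eq_or_lt_of_le hβ with rfl | hβ'
  · norm_num [Real.rpow_one]
    nlinarith [sq_nonneg (a - b)]
  -- β > 1
  have hβ0 : 0 < β := by linarith
  set q := (β - 1) / 2 with hq
  have hq0 : 0 < q := by simp only [hq]; linarith
  have h2q : 2 * q = β - 1 := by ring
  have hI1 : (∫ t in b..a, t ^ q) = (a ^ (q + 1) - b ^ (q + 1)) / (q + 1) := by
    rw [integral_rpow (Or.inl (by linarith))]
  have hI2 : (∫ t in b..a, t ^ (2 * q)) = (a ^ β - b ^ β) / β := by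
    rw [integral_rpow (Or.inl (by rw [h2q]; linarith))]
    rw [h2q]; ring_nf
  have key := aux_cs a b q hb hab hq0
  rw [hI1, hI2] at key
  have hq1 : q + 1 = (β + 1) / 2 := by rw [hq]; ring
  rw [hq1] at key
  have h1 : (0:ℝ) < (β + 1) / 2 := by linarith
  -- key : ((a^((β+1)/2) - b^((β+1)/2)) / ((β+1)/2))^2 ≤ (a-b) * ((a^β - b^β)/β)
  rw [div_pow, div_le_iff₀ (by positivity)] at key
  have hAB : 0 ≤ a ^ β - b ^ β := by
    have := Real.rpow_le_rpow hb hab hβ0.le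
    linarith
  have heq : ((β + 1) ^ 2 / (4 * β)) * ((a - b) * (a ^ β - b ^ β)) =
      (a - b) * ((a ^ β - b ^ β) / β) * ((β + 1) / 2) ^ 2 := by
    field_simp; ring
  rw [heq]; exact key
end
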